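/- There is a constant C > 0 such that for every real x ≥ 0, |Ai(x)| ≤ C e^{−(2/3) x^{3/2}}. -/

import Mathlib

open MeasureTheory Set Complex

/-- `e^{iπ/3}`. -/
noncomputable def eP : ℂ := Complex.exp (Real.pi / 3 * Complex.I)

/-- `e^{-iπ/3}`. -/
noncomputable def eM : ℂ := Complex.exp (-(Real.pi / 3) * Complex.I)

/-- The Airy function `Ai(x)`. -/
noncomputable def Ai (x : ℝ) : ℂ :=
  (2 * Real.pi * Complex.I)⁻¹ *
    ∫ u in Ioi (0 : ℝ),
      (eP * Complex.exp (-(u : ℂ) ^ 3 / 3 - x * (eP * u))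
        - eM * Complex.exp (-(u : ℂ) ^ 3 / 3 - x * (eM * u)))

/-! ### Basic facts about `eP`, `eM` -/

lemma eP_re : eP.re = 1/2 := by
  rw [show eP = Complex.exp (↑(Real.pi/3) * Complex.I) by rw [eP]; push_cast; ring_nf]
  rw [Complex.exp_ofReal_mul_I_re, Real.cos_pi_div_three]

lemma eP_im : eP.im = Real.sqrt 3 / 2 := by
  rw [show eP = Complex.exp (↑(Real.pi/3) * Complex.I) by rw [eP]; push_cast; ring_nf]
  rw [Complex.exp_ofReal_mul_I_im, Real.sin_pi_div_three]

lemma eM_re : eM.re = 1/2 := by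
  rw [show eM = Complex.exp (↑(-(Real.pi/3)) * Complex.I) by rw [eM]; push_cast; ring_nf]
  rw [Complex.exp_ofReal_mul_I_re, Real.cos_neg, Real.cos_pi_div_three]

lemma eM_im : eM.im = -(Real.sqrt 3 / 2) := by
  rw [show eM = Complex.exp (↑(-(Real.pi/3)) * Complex.I) by rw [eM]; push_cast; ring_nf]
  rw [Complex.exp_ofReal_mul_I_im, Real.sin_neg, Real.sin_pi_div_three]

lemma eP_norm : ‖eP‖ = 1 := by
  rw [eP, Complex.norm_exp]
  norm_num

lemma eM_norm : ‖eM‖ = 1 := by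
  rw [eM, Complex.norm_exp]
  norm_num

lemma eP_cube : eP ^ 3 = -1 := by
  rw [eP, ← Complex.exp_nat_mul]
  rw [show (3:ℕ) * (↑Real.pi / 3 * Complex.I) = ↑Real.pi * Complex.I by push_cast; ring]
  exact Complex.exp_pi_mul_I

lemma eM_cube : eM ^ 3 = -1 := by
  rw [eM, ← Complex.exp_nat_mul]
  rw [show (3:ℕ) * (-(↑Real.pi / 3) * Complex.I) = -(↑Real.pi * Complex.I) by push_cast; ring]
  rw [Complex.exp_neg, Complex.exp_pi_mul_I]
  norm_num

/-! ### The phase function and its real part -/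

noncomputable def fC (x : ℝ) (z : ℂ) : ℂ := z^3/3 - x*z

noncomputable def Rf (x s u : ℝ) : ℝ := s^3/3 + s^2*u/2 - s*u^2/2 - x*s - x*u/2 - u^3/3

lemma sqrt3_sq : Real.sqrt 3 ^ 2 = 3 := Real.sq_sqrt (by norm_num)

lemma re_fP (x s u : ℝ) : (fC x (↑s + eP*↑u)).re = Rf x s u := by
  simp only [fC, Rf, pow_succ, pow_zero, one_mul, Complex.sub_re, Complex.div_ofNat_re,
    Complex.mul_re, Complex.mul_im, Complex.add_re, Complex.add_im, Complex.ofReal_re,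
    Complex.ofReal_im, eP_re, eP_im]
  ring_nf
  rw [sqrt3_sq]
  ring

lemma re_fM (x s u : ℝ) : (fC x (↑s + eM*↑u)).re = Rf x s u := by
  simp only [fC, Rf, pow_succ, pow_zero, one_mul, Complex.sub_re, Complex.div_ofNat_re,
    Complex.mul_re, Complex.mul_im, Complex.add_re, Complex.add_im, Complex.ofReal_re,
    Complex.ofReal_im, eM_re, eM_im]
  ring_nf
  rw [sqrt3_sq]
  ring

/-! ### Derivatives -/

lemma hasDerivAt_fC (x : ℝ) (w : ℂ) : HasDerivAt (fC x) (w^2 - x) w := by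
  have h1 : HasDerivAt (fun z : ℂ => z^3/3 - ↑x*z) (((3:ℕ)*w^2)/3 - (x:ℂ)*1) w := by
    exact ((hasDerivAt_pow 3 w).div_const 3).sub ((hasDerivAt_id w).const_mul (x:ℂ))
  have h2 : (((3:ℕ):ℂ)*w^2)/3 - (x:ℂ)*1 = w^2 - x := by push_cast; ring
  rw [h2] at h1
  exact h1

lemma hasDerivAt_u (x : ℝ) (c : ℂ) (s u : ℝ) :
    HasDerivAt (fun u : ℝ => Complex.exp (fC x (↑s + c*↑u)))
      (c * ((↑s + c*↑u)^2 - ↑x) * Complex.exp (fC x (↑s + c*↑u))) u := by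
  have h1 : HasDerivAt (fun z : ℂ => Complex.exp (fC x (↑s + c*z)))
      (c * ((↑s + c*↑u)^2 - ↑x) * Complex.exp (fC x (↑s + c*↑u))) (↑u : ℂ) := by
    have hin : HasDerivAt (fun z : ℂ => (↑s : ℂ) + c*z) c ↑u := by
      simpa using ((hasDerivAt_id (↑u:ℂ)).const_mul c).const_add (↑s:ℂ)
    have h := ((hasDerivAt_fC x (↑s + c*↑u)).comp (↑u : ℂ) hin).cexp
    convert h using 1
    · rfl
    · simp only [Function.comp_apply]
    · simp only [Function.comp_apply]
      ring
  exact h1.comp_ofReal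

lemma hasDerivAt_s (x : ℝ) (c : ℂ) (u s : ℝ) :
    HasDerivAt (fun s : ℝ => Complex.exp (fC x (↑s + c*↑u)))
      (((↑s + c*↑u)^2 - ↑x) * Complex.exp (fC x (↑s + c*↑u))) s := by
  have h1 : HasDerivAt (fun z : ℂ => Complex.exp (fC x (z + c*↑u)))
      (((↑s + c*↑u)^2 - ↑x) * Complex.exp (fC x (↑s + c*↑u))) (↑s : ℂ) := by
    have hin : HasDerivAt (fun z : ℂ => z + c*(↑u:ℂ)) 1 ↑s := (hasDerivAt_id _).add_const _
    have h := ((hasDerivAt_fC x (↑s + c*↑u)).comp (↑s : ℂ) hin).cexp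
    convert h using 1
    · rfl
    · simp only [Function.comp_apply]
    · simp only [Function.comp_apply]
      ring
  exact h1.comp_ofReal

/-! ### Integrability of the majorants -/

lemma amgm (b u : ℝ) (hb : 0 ≤ b) (hu : 0 ≤ u) : b*u^2 ≤ u^3/9 + 12*b^3 := by
  nlinarith [mul_nonneg (sq_nonneg (u - 6*b)) (by linarith : (0:ℝ) ≤ u + 3*b)]

lemma cubic_le (c0 c1 c2 : ℝ) : ∃ E, ∀ u : ℝ, 0 ≤ u →
    c0 + c1*u + c2*u^2 - u^3/3 ≤ E - (2/9)*u := by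
  refine ⟨c0 + |c1| + 12*(|c1| + |c2|)^3 + 2/9, fun u hu => ?_⟩
  have h1 : c1*u ≤ |c1| * u := mul_le_mul_of_nonneg_right (le_abs_self c1) hu
  have h2 : c2*u^2 ≤ |c2| * u^2 := mul_le_mul_of_nonneg_right (le_abs_self c2) (sq_nonneg u)
  have h3 : |c1| * u ≤ |c1| + |c1| * u^2 := by nlinarith [abs_nonneg c1, sq_nonneg (u-1)]
  have h4 : (|c1| + |c2|)*u^2 ≤ u^3/9 + 12*(|c1| + |c2|)^3 :=
    amgm _ u (by positivity) hu
  have h5 : u - 1 ≤ u^3 := by nlinarith [sq_nonneg (u-1), sq_nonneg u, sq_nonneg (u+1)]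
  linarith

lemma key_int (c0 c1 c2 : ℝ) :
    IntegrableOn (fun u : ℝ => Real.exp (c0 + c1*u + c2*u^2 - u^3/3)) (Ioi 0) := by
  obtain ⟨E, hE⟩ := cubic_le c0 c1 c2
  have hmaj : IntegrableOn (fun u : ℝ => Real.exp E * Real.exp (-(2/9)*u)) (Ioi 0) :=
    (exp_neg_integrableOn_Ioi 0 (by norm_num : (0:ℝ) < 2/9)).const_mul _
  refine hmaj.mono' ?_ ?_
  · exact (Continuous.aestronglyMeasurable (by continuity))
  · filter_upwards [ae_restrict_mem measurableSet_Ioi] with u hu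
    rw [Real.norm_eq_abs, abs_of_pos (Real.exp_pos _), ← Real.exp_add]
    exact Real.exp_le_exp.2 (by linarith [hE u (le_of_lt hu)])

lemma Rf_le (x s u m : ℝ) (hx : 0 ≤ x) (hu : 0 ≤ u) (hm : |s| ≤ m) :
    Rf x s u ≤ (m^3/3 + x*m) + (m^2/2)*u + (m/2)*u^2 - u^3/3 := by
  have hs := abs_le.1 hm
  have hm0 : 0 ≤ m := le_trans (abs_nonneg s) hm
  have h1 : s^3 ≤ m^3 := by nlinarith [sq_nonneg (s+m), sq_nonneg (s-m), hs.1, hs.2]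
  have h2 : s^2 ≤ m^2 := sq_le_sq' hs.1 hs.2
  have h3 : -s*u^2 ≤ m*u^2 := by nlinarith [sq_nonneg u, hs.1]
  have h4 : -x*s ≤ x*m := by nlinarith [hs.1]
  simp only [Rf]
  nlinarith [mul_nonneg (mul_nonneg hx hu) (by norm_num : (0:ℝ) ≤ 1/2), hu, h2,
    mul_le_mul_of_nonneg_right h2 hu]

/-! ### The integrands -/

noncomputable def hF (x s u : ℝ) : ℂ :=
  eP * Complex.exp (fC x (↑s + eP*↑u)) - eM * Complex.exp (fC x (↑s + eM*↑u))

noncomputable def gF (x s u : ℝ) : ℂ :=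
  eP * (((↑s + eP*↑u)^2 - ↑x) * Complex.exp (fC x (↑s + eP*↑u)))
    - eM * (((↑s + eM*↑u)^2 - ↑x) * Complex.exp (fC x (↑s + eM*↑u)))

lemma hF_cont (x s : ℝ) : Continuous (fun u => hF x s u) := by
  unfold hF fC
  continuity

lemma gF_cont (x s : ℝ) : Continuous (fun u => gF x s u) := by
  unfold gF fC
  continuity

lemma norm_exp_fP (x s u : ℝ) : ‖Complex.exp (fC x (↑s + eP*↑u))‖ = Real.exp (Rf x s u) := by
  rw [Complex.norm_exp, re_fP]

lemma norm_exp_fM (x s u : ℝ) : ‖Complex.exp (fC x (↑s + eM*↑u))‖ = Real.exp (Rf x s u) := by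
  rw [Complex.norm_exp, re_fM]

lemma norm_hF_le (x s u : ℝ) : ‖hF x s u‖ ≤ 2 * Real.exp (Rf x s u) := by
  calc ‖hF x s u‖ ≤ ‖eP * Complex.exp (fC x (↑s + eP*↑u))‖
        + ‖eM * Complex.exp (fC x (↑s + eM*↑u))‖ := norm_sub_le _ _
    _ = 2 * Real.exp (Rf x s u) := by
        rw [norm_mul, norm_mul, eP_norm, eM_norm, norm_exp_fP, norm_exp_fM]; ring

lemma norm_term_le (x s u m : ℝ) (c : ℂ) (hc : ‖c‖ = 1)
    (hre : ‖Complex.exp (fC x (↑s + c*↑u))‖ = Real.exp (Rf x s u))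
    (hx : 0 ≤ x) (hu : 0 ≤ u) (hm : |s| ≤ m) :
    ‖((↑s + c*↑u)^2 - ↑x) * Complex.exp (fC x (↑s + c*↑u))‖ ≤
      Real.exp ((m^3/3 + x*m + (m+u)^2 + x) + (m^2/2)*u + (m/2)*u^2 - u^3/3) := by
  have hm0 : 0 ≤ m := le_trans (abs_nonneg s) hm
  have hz : ‖(↑s + c*↑u : ℂ)‖ ≤ m + u := by
    calc ‖(↑s + c*↑u : ℂ)‖ ≤ ‖(↑s : ℂ)‖ + ‖c*↑u‖ := norm_add_le _ _
      _ = |s| + |u| := by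
          rw [norm_mul, hc, Complex.norm_real, Complex.norm_real, Real.norm_eq_abs,
            Real.norm_eq_abs]; ring
      _ ≤ m + u := by rw [_root_.abs_of_nonneg hu]; linarith
  have hpre : ‖((↑s + c*↑u)^2 - (↑x:ℂ))‖ ≤ (m+u)^2 + x := by
    calc ‖((↑s + c*↑u)^2 - (↑x:ℂ))‖ ≤ ‖(↑s + c*↑u : ℂ)^2‖ + ‖(↑x:ℂ)‖ := norm_sub_le _ _
      _ = ‖(↑s + c*↑u : ℂ)‖^2 + |x| := by rw [norm_pow, Complex.norm_real, Real.norm_eq_abs]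
      _ ≤ (m+u)^2 + x := by
          rw [_root_.abs_of_nonneg hx]
          have := pow_le_pow_left₀ (norm_nonneg _) hz 2
          linarith
  have hpre2 : (m+u)^2 + x ≤ Real.exp ((m+u)^2 + x) := by
    have := Real.add_one_le_exp ((m+u)^2 + x)
    linarith
  calc ‖((↑s + c*↑u)^2 - (↑x:ℂ)) * Complex.exp (fC x (↑s + c*↑u))‖
      = ‖((↑s + c*↑u)^2 - (↑x:ℂ))‖ * Real.exp (Rf x s u) := by rw [norm_mul, hre]
    _ ≤ Real.exp ((m+u)^2 + x) * Real.exp ((m^3/3 + x*m) + (m^2/2)*u + (m/2)*u^2 - u^3/3) := by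
        apply mul_le_mul (le_trans hpre hpre2)
          (Real.exp_le_exp.2 (Rf_le x s u m hx hu hm)) (Real.exp_pos _).le (Real.exp_pos _).le
    _ = Real.exp ((m^3/3 + x*m + (m+u)^2 + x) + (m^2/2)*u + (m/2)*u^2 - u^3/3) := by
        rw [← Real.exp_add]; ring_nf

lemma norm_gF_le (x s u m : ℝ) (hx : 0 ≤ x) (hu : 0 ≤ u) (hm : |s| ≤ m) :
    ‖gF x s u‖ ≤ 2 * Real.exp ((m^3/3 + x*m + m^2 + x) + (m^2/2 + 2*m)*u + (m/2 + 1)*u^2 - u^3/3) := by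
  have e1 := norm_term_le x s u m eP eP_norm (norm_exp_fP x s u) hx hu hm
  have e2 := norm_term_le x s u m eM eM_norm (norm_exp_fM x s u) hx hu hm
  have hexp : (m^3/3 + x*m + (m+u)^2 + x) + (m^2/2)*u + (m/2)*u^2 - u^3/3
      = (m^3/3 + x*m + m^2 + x) + (m^2/2 + 2*m)*u + (m/2 + 1)*u^2 - u^3/3 := by ring
  calc ‖gF x s u‖ ≤ ‖eP * (((↑s + eP*↑u)^2 - ↑x) * Complex.exp (fC x (↑s + eP*↑u)))‖
        + ‖eM * (((↑s + eM*↑u)^2 - ↑x) * Complex.exp (fC x (↑s + eM*↑u)))‖ := norm_sub_le _ _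
    _ ≤ Real.exp ((m^3/3 + x*m + (m+u)^2 + x) + (m^2/2)*u + (m/2)*u^2 - u^3/3)
        + Real.exp ((m^3/3 + x*m + (m+u)^2 + x) + (m^2/2)*u + (m/2)*u^2 - u^3/3) := by
        simp only [norm_mul, eP_norm, eM_norm, one_mul]
        exact add_le_add (by simpa [norm_mul] using e1) (by simpa [norm_mul] using e2)
    _ = 2 * Real.exp ((m^3/3 + x*m + m^2 + x) + (m^2/2 + 2*m)*u + (m/2 + 1)*u^2 - u^3/3) := by
        rw [hexp]; ring

/-! ### Main theorem -/


lemma hF_zero (x u : ℝ) :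
    hF x 0 u = eP * Complex.exp (-(u : ℂ) ^ 3 / 3 - x * (eP * u))
      - eM * Complex.exp (-(u : ℂ) ^ 3 / 3 - x * (eM * u)) := by
  have harg : ∀ c : ℂ, c^3 = -1 → fC x (↑(0:ℝ) + c*↑u) = -(u:ℂ)^3/3 - x*(c*u) := by
    intro c hc
    simp only [fC, Complex.ofReal_zero, zero_add, mul_pow, hc]
    ring
  rw [hF, harg eP eP_cube, harg eM eM_cube]

lemma hF_int (x s : ℝ) (hx : 0 ≤ x) : IntegrableOn (fun u => hF x s u) (Ioi 0) := by
  set m := |s| + 1 with hmdef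
  have hm : |s| ≤ m := by simp [hmdef]
  refine ((key_int (m^3/3 + x*m) (m^2/2) (m/2)).const_mul 2).mono'
    ((hF_cont x s).aestronglyMeasurable) ?_
  filter_upwards [ae_restrict_mem measurableSet_Ioi] with u hu
  calc ‖hF x s u‖ ≤ 2 * Real.exp (Rf x s u) := norm_hF_le x s u
    _ ≤ 2 * Real.exp ((m^3/3 + x*m) + (m^2/2)*u + (m/2)*u^2 - u^3/3) := by
        have := Real.exp_le_exp.2 (Rf_le x s u m hx (le_of_lt hu) hm)
        linarith

lemma gF_int (x s : ℝ) (hx : 0 ≤ x) : IntegrableOn (fun u => gF x s u) (Ioi 0) := by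
  set m := |s| + 1 with hmdef
  have hm : |s| ≤ m := by simp [hmdef]
  refine ((key_int (m^3/3 + x*m + m^2 + x) (m^2/2 + 2*m) (m/2 + 1)).const_mul 2).mono'
    ((gF_cont x s).aestronglyMeasurable) ?_
  filter_upwards [ae_restrict_mem measurableSet_Ioi] with u hu
  exact norm_gF_le x s u m hx (le_of_lt hu) hm

lemma gF_integral_zero (x s : ℝ) (hx : 0 ≤ x) : (∫ u in Ioi (0:ℝ), gF x s u) = 0 := by
  set φ : ℝ → ℂ := fun u =>
    Complex.exp (fC x (↑s + eP*↑u)) - Complex.exp (fC x (↑s + eM*↑u)) with hφ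
  have hderiv : ∀ u ∈ Ici (0:ℝ), HasDerivAt φ (gF x s u) u := by
    intro u _
    have h := (hasDerivAt_u x eP s u).sub (hasDerivAt_u x eM s u)
    simpa [gF, mul_assoc, hφ, Pi.sub_def] using h
  have htend : Filter.Tendsto φ Filter.atTop (nhds 0) := by
    obtain ⟨E, hE⟩ := cubic_le ((|s|+1)^3/3 + x*(|s|+1)) ((|s|+1)^2/2) ((|s|+1)/2)
    have hm : |s| ≤ |s|+1 := by linarith [abs_nonneg s]
    apply squeeze_zero_norm' (a := fun u => 2 * Real.exp (E - (2/9)*u))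
    · filter_upwards [Filter.eventually_ge_atTop (0:ℝ)] with u hu
      calc ‖φ u‖ ≤ ‖Complex.exp (fC x (↑s + eP*↑u))‖ + ‖Complex.exp (fC x (↑s + eM*↑u))‖ :=
            norm_sub_le _ _
        _ = 2 * Real.exp (Rf x s u) := by
            rw [norm_exp_fP, norm_exp_fM]; ring
        _ ≤ 2 * Real.exp (E - (2/9)*u) := by
            have h1 := Rf_le x s u (|s|+1) hx hu hm
            have h2 := hE u hu
            have := Real.exp_le_exp.2 (le_trans h1 h2)
            linarith
    · have h1 : Filter.Tendsto (fun u : ℝ => E - (2/9)*u) Filter.atTop Filter.atBot := by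
        apply Filter.tendsto_atBot_add_const_left
        exact Filter.tendsto_id.const_mul_atTop_of_neg (by norm_num : -(2/9 : ℝ) < 0)
          |>.congr (fun u => by simp)
      have h2 := (Real.tendsto_exp_atBot.comp h1).const_mul (2:ℝ)
      simpa using h2
  have h0 : φ 0 = 0 := by simp [hφ]
  have := integral_Ioi_of_hasDerivAt_of_tendsto' hderiv (gF_int x s hx) htend
  rw [this, h0, sub_zero]

lemma G_hasDeriv (x : ℝ) (hx : 0 ≤ x) (s₀ : ℝ) :
    HasDerivAt (fun s => ∫ u in Ioi (0:ℝ), hF x s u) 0 s₀ := by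
  set m := |s₀| + 2 with hmdef
  have hball : ∀ s ∈ Metric.ball s₀ 1, |s| ≤ m := by
    intro s hs
    rw [Metric.mem_ball, Real.dist_eq] at hs
    calc |s| = |s₀ + (s - s₀)| := by ring_nf
      _ ≤ |s₀| + |s - s₀| := abs_add_le _ _
      _ ≤ m := by rw [hmdef]; linarith [hs.le]
  have key := (hasDerivAt_integral_of_dominated_loc_of_deriv_le
    (μ := volume.restrict (Ioi (0:ℝ)))
    (F := fun s u => hF x s u) (F' := fun s u => gF x s u)
    (bound := fun u => 2 * Real.exp ((m^3/3 + x*m + m^2 + x) + (m^2/2 + 2*m)*u + (m/2 + 1)*u^2 - u^3/3))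
    (Metric.ball_mem_nhds s₀ one_pos)
    (Filter.Eventually.of_forall fun s => (hF_cont x s).aestronglyMeasurable)
    (hF_int x s₀ hx)
    ((gF_cont x s₀).aestronglyMeasurable)
    ?_ ?_ ?_).2
  · rwa [gF_integral_zero x s₀ hx] at key
  · filter_upwards [ae_restrict_mem measurableSet_Ioi] with u hu
    intro s hs
    exact norm_gF_le x s u m hx (le_of_lt hu) (hball s hs)
  · exact (key_int _ _ _).const_mul 2
  · filter_upwards with u
    intro s _
    exact ((hasDerivAt_s x eP u s).const_mul eP).sub ((hasDerivAt_s x eM u s).const_mul eM)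

/-- Exponential decay of the Airy function on the positive half-line:
there is `C > 0` with `|Ai(x)| ≤ C e^{−(2/3)x^{3/2}}` for all `x ≥ 0`. -/
theorem airy_exponential_decay :
    ∃ C > (0 : ℝ), ∀ x : ℝ, 0 ≤ x →
      ‖Ai x‖ ≤ C * Real.exp (-(2 / 3) * x ^ ((3 : ℝ) / 2)) := by
  have hKint : IntegrableOn (fun u : ℝ => Real.exp (-u^3/3)) (Ioi 0) := by
    have h := key_int 0 0 0
    refine h.congr_fun ?_ measurableSet_Ioi
    intro u _
    norm_num
    ring_nf
  set K := ∫ u in Ioi (0:ℝ), Real.exp (-u^3/3) with hKdef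
  have hK0 : 0 ≤ K := integral_nonneg fun u => (Real.exp_pos _).le
  have hπ := Real.pi_pos
  refine ⟨K/Real.pi + 1, by positivity, fun x hx => ?_⟩
  set a := Real.sqrt x with hadef
  have ha0 : 0 ≤ a := Real.sqrt_nonneg x
  have ha2 : a^2 = x := Real.sq_sqrt hx
  have hx32 : x ^ ((3:ℝ)/2) = a^3 := by
    rw [show ((3:ℝ)/2) = (1/2:ℝ)*(3:ℕ) by norm_num, Real.rpow_mul hx, Real.rpow_natCast,
      hadef, Real.sqrt_eq_rpow]
  -- constancy
  have hconst : (∫ u in Ioi (0:ℝ), hF x 0 u) = ∫ u in Ioi (0:ℝ), hF x a u :=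
    is_const_of_deriv_eq_zero
      (fun s => (G_hasDeriv x hx s).differentiableAt)
      (fun s => (G_hasDeriv x hx s).deriv) 0 a
  have hAi : Ai x = (2 * (Real.pi:ℂ) * Complex.I)⁻¹ * ∫ u in Ioi (0:ℝ), hF x a u := by
    rw [Ai, ← hconst]
    congr 1
    refine setIntegral_congr_fun measurableSet_Ioi fun u _ => ?_
    rw [hF_zero]
  -- bound the integral at s = a
  have hRa : ∀ u : ℝ, 0 ≤ u → Rf x a u ≤ -(2/3)*a^3 - u^3/3 := by
    intro u hu
    have h1 : x*a = a^3 := by rw [← ha2]; ring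
    have h2 : x*u = a^2*u := by rw [← ha2]
    have h3 : 0 ≤ a*u^2 := mul_nonneg ha0 (sq_nonneg u)
    simp only [Rf]
    nlinarith [h1, h2, h3]
  have hbound : ‖∫ u in Ioi (0:ℝ), hF x a u‖ ≤ 2 * Real.exp (-(2/3)*x ^ ((3:ℝ)/2)) * K := by
    have hmaj : IntegrableOn
        (fun u : ℝ => 2 * Real.exp (-(2/3)*x ^ ((3:ℝ)/2)) * Real.exp (-u^3/3)) (Ioi 0) :=
      hKint.const_mul _
    have h : ‖∫ u in Ioi (0:ℝ), hF x a u‖ ≤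
        ∫ u in Ioi (0:ℝ), 2 * Real.exp (-(2/3)*x ^ ((3:ℝ)/2)) * Real.exp (-u^3/3) := by
      apply norm_integral_le_of_norm_le hmaj
      filter_upwards [ae_restrict_mem measurableSet_Ioi] with u hu
      calc ‖hF x a u‖ ≤ 2 * Real.exp (Rf x a u) := norm_hF_le x a u
        _ ≤ 2 * Real.exp (-(2/3)*x ^ ((3:ℝ)/2)) * Real.exp (-u^3/3) := by
            rw [mul_assoc, ← Real.exp_add]
            have := Real.exp_le_exp.2 (by rw [hx32]; linarith [hRa u (le_of_lt hu)] :
              Rf x a u ≤ -(2/3)*x ^ ((3:ℝ)/2) + -u^3/3)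
            linarith
    rw [MeasureTheory.integral_const_mul] at h
    exact h
  have hnorm : ‖(2 * (Real.pi:ℂ) * Complex.I)⁻¹‖ = (2*Real.pi)⁻¹ := by
    rw [norm_inv]
    congr 1
    simp [_root_.abs_of_pos hπ]
  calc ‖Ai x‖ = (2*Real.pi)⁻¹ * ‖∫ u in Ioi (0:ℝ), hF x a u‖ := by
        rw [hAi, norm_mul, hnorm]
    _ ≤ (2*Real.pi)⁻¹ * (2 * Real.exp (-(2/3)*x ^ ((3:ℝ)/2)) * K) := by
        apply mul_le_mul_of_nonneg_left hbound (by positivity)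
    _ = (K/Real.pi) * Real.exp (-(2/3)*x ^ ((3:ℝ)/2)) := by
        field_simp
    _ ≤ (K/Real.pi + 1) * Real.exp (-(2/3)*x ^ ((3:ℝ)/2)) := by
        have := Real.exp_pos (-(2/3)*x ^ ((3:ℝ)/2))
        nlinarith
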